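/- Let f : ℝ^{n×m} → ℝ be continuously differentiable, λ > 0, μ > 0. Suppose (Ū, V̄) ∈ ℝ^{n×r} × ℝ^{m×r} is a strong local minimizer of Φ_{λ,μ} (i.e. there exist α > 0 and ε > 0 such that Φ_{λ,μ}(U,V) ≥ Φ_{λ,μ}(Ū,V̄) + α‖(U,V) − (Ū,V̄)‖_F² whenever ‖(U,V) − (Ū,V̄)‖_F ≤ ε). Then J_Ū = J_V̄ =: J, and the submatrix pair (Ū_J, V̄_J) ∈ ℝ^{n×|J|} × ℝ^{m×|J|}, consisting of the nonzero columns of Ū and V̄, is a strong local minimizer of the function (A,B) ↦ f(ABᵀ) + (μ/2)(‖A‖_F² + ‖B‖_F²) on ℝ^{n×|J|} × ℝ^{m×|J|}. -/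
import Mathlib


open Filter Topology Matrix
open scoped Classical

attribute [local instance] Matrix.frobeniusSeminormedAddCommGroup
  Matrix.frobeniusNormedAddCommGroup Matrix.frobeniusNormedSpace

/-- The Frobenius (trace) inner product `⟨A,B⟩ = trace(AᵀB) = ∑ᵢⱼ Aᵢⱼ Bᵢⱼ` on matrices. -/
noncomputable def frobInner {α β : Type*} [Fintype α] [Fintype β] (A B : Matrix α β ℝ) : ℝ :=
  ∑ i, ∑ j, A i j * B i j

/-- The column `ℓ_{2,0}`-norm: the number of nonzero columns. -/
noncomputable def l20 {α β : Type*} [Fintype α] [Fintype β] (A : Matrix α β ℝ) : ℕ :=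
  {j : β | (fun i => A i j) ≠ 0}.ncard

/-- `F_μ(U,V) = f(UVᵀ) + (μ/2)(‖U‖_F² + ‖V‖_F²)`, for factors with columns indexed
by an arbitrary finite type `γ`. -/
noncomputable def Fmu {n m : ℕ} {γ : Type*} [Fintype γ] (f : Matrix (Fin n) (Fin m) ℝ → ℝ)
    (mu : ℝ) (U : Matrix (Fin n) γ ℝ) (V : Matrix (Fin m) γ ℝ) : ℝ :=
  f (U * Vᵀ) + mu / 2 * (frobInner U U + frobInner V V)

/-- `Φ_{λ,μ}(U,V) = f(UVᵀ) + (μ/2)(‖U‖_F² + ‖V‖_F²) + λ(‖U‖_{2,0} + ‖V‖_{2,0})`. -/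
noncomputable def Phi {n m r : ℕ} (f : Matrix (Fin n) (Fin m) ℝ → ℝ) (lam mu : ℝ)
    (U : Matrix (Fin n) (Fin r) ℝ) (V : Matrix (Fin m) (Fin r) ℝ) : ℝ :=
  Fmu f mu U V + lam * ((l20 U : ℝ) + (l20 V : ℝ))

/-- The squared Frobenius norm of a pair: `‖(U,V)‖_F² = ‖U‖_F² + ‖V‖_F²`. -/
noncomputable def pairNormSq {α β γ : Type*} [Fintype α] [Fintype β] [Fintype γ]
    (U : Matrix α γ ℝ) (V : Matrix β γ ℝ) : ℝ :=
  frobInner U U + frobInner V V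

/- ---------- auxiliary lemmas ---------- -/

theorem sum_dite_subtype {r : ℕ} (P : Fin r → Prop) [DecidablePred P] (g : ∀ k, P k → ℝ) :
    ∑ k, (if h : P k then g k h else 0) = ∑ k : Subtype P, g k.1 k.2 := by
  rw [← Fintype.sum_subtype_add_sum_subtype P (fun k => if h : P k then g k h else 0)]
  have h1 : ∑ k : Subtype P, (if h : P k.1 then g k.1 h else 0) = ∑ k : Subtype P, g k.1 k.2 :=
    Finset.sum_congr rfl fun k _ => dif_pos k.2
  have h2 : ∑ k : {x // ¬ P x}, (if h : P k.1 then g k.1 h else 0) = 0 :=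
    Finset.sum_eq_zero fun k _ => dif_neg k.2
  rw [h1, h2, add_zero]

theorem frob_ext {N r : ℕ} (P : Fin r → Prop) [DecidablePred P]
    (M : Matrix (Fin N) (Fin r) ℝ) (C : Matrix (Fin N) (Subtype P) ℝ)
    (h : ∀ i k, M i k = if hk : P k then C i ⟨k, hk⟩ else 0) :
    frobInner M M = frobInner C C := by
  unfold frobInner
  refine Finset.sum_congr rfl fun i _ => ?_
  have : ∀ k, M i k * M i k = if hk : P k then C i ⟨k, hk⟩ * C i ⟨k, hk⟩ else 0 := by
    intro k
    by_cases hk : P k <;> simp [h i k, hk]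
  rw [Finset.sum_congr rfl fun k _ => this k, sum_dite_subtype P (fun k hk => C i ⟨k,hk⟩ * C i ⟨k,hk⟩)]

theorem mul_ext {N M' r : ℕ} (P : Fin r → Prop) [DecidablePred P]
    (U : Matrix (Fin N) (Fin r) ℝ) (V : Matrix (Fin M') (Fin r) ℝ)
    (A : Matrix (Fin N) (Subtype P) ℝ) (B : Matrix (Fin M') (Subtype P) ℝ)
    (hU : ∀ i k, U i k = if hk : P k then A i ⟨k, hk⟩ else 0)
    (hV : ∀ i k, V i k = if hk : P k then B i ⟨k, hk⟩ else 0) :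
    U * Vᵀ = A * Bᵀ := by
  ext i i'
  rw [Matrix.mul_apply, Matrix.mul_apply]
  have : ∀ k, U i k * Vᵀ k i' = if hk : P k then A i ⟨k, hk⟩ * B i' ⟨k, hk⟩ else 0 := by
    intro k
    by_cases hk : P k <;> simp [Matrix.transpose_apply, hU i k, hV i' k, hk]
  rw [Finset.sum_congr rfl fun k _ => this k,
    sum_dite_subtype P (fun k hk => A i ⟨k,hk⟩ * B i' ⟨k,hk⟩)]
  rfl

theorem pairNormSq_comm {α β γ : Type*} [Fintype α] [Fintype β] [Fintype γ]
    (U : Matrix α γ ℝ) (V : Matrix β γ ℝ) : pairNormSq U V = pairNormSq V U :=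
  add_comm _ _

/-- Key one-direction lemma: if the `j`-th column of `Vbar` is zero, so is that of `Ubar`. -/
theorem aux_col {n m r : ℕ} (f : Matrix (Fin n) (Fin m) ℝ → ℝ) (lam mu α ε : ℝ)
    (hmu : 0 < mu) (hα : 0 < α) (hε : 0 < ε)
    (Ubar : Matrix (Fin n) (Fin r) ℝ) (Vbar : Matrix (Fin m) (Fin r) ℝ)
    (hmin : ∀ U V, Real.sqrt (pairNormSq (U - Ubar) (V - Vbar)) ≤ ε →
        Phi f lam mu U V ≥ Phi f lam mu Ubar Vbar + α * pairNormSq (U - Ubar) (V - Vbar))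
    (j : Fin r) (hV : (fun i : Fin m => Vbar i j) = 0) : (fun i : Fin n => Ubar i j) = 0 := by
  by_contra hU
  set c : ℝ := ∑ i, Ubar i j * Ubar i j with hc
  have hc0 : 0 < c := by
    obtain ⟨i0, hi0⟩ := Function.ne_iff.mp hU
    exact Finset.sum_pos' (fun i _ => mul_self_nonneg _)
      ⟨i0, Finset.mem_univ _, mul_self_pos.mpr hi0⟩
  have hsc : 0 < Real.sqrt c := Real.sqrt_pos.mpr hc0
  set t : ℝ := min (ε / Real.sqrt c) (1/2) with ht
  have ht0 : 0 < t := lt_min (by positivity) (by norm_num)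
  have ht1 : t ≤ 1/2 := min_le_right _ _
  set U : Matrix (Fin n) (Fin r) ℝ :=
    Matrix.of fun i k => if k = j then (1 - t) * Ubar i j else Ubar i k with hUdef
  -- the perturbation
  have hdiff : ∀ i k, (U - Ubar) i k = if k = j then -t * Ubar i j else 0 := by
    intro i k
    simp only [Matrix.sub_apply, hUdef, Matrix.of_apply]
    split
    · rename_i h; subst h; ring
    · ring
  have hns : pairNormSq (U - Ubar) (Vbar - Vbar) = t^2 * c := by
    unfold pairNormSq frobInner
    have h2 : (Vbar - Vbar) = 0 := sub_self _
    rw [h2]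
    simp only [Matrix.zero_apply, mul_zero, Finset.sum_const_zero, add_zero]
    rw [hc, Finset.mul_sum]
    refine Finset.sum_congr rfl fun i _ => ?_
    have : ∀ k, (U - Ubar) i k * (U - Ubar) i k
        = if k = j then t^2 * (Ubar i j * Ubar i j) else 0 := by
      intro k
      rw [hdiff i k]
      split <;> ring
    rw [Finset.sum_congr rfl fun k _ => this k, Finset.sum_ite_eq' Finset.univ j
      (fun _ => t^2 * (Ubar i j * Ubar i j))]
    simp
  have hsqrt : Real.sqrt (pairNormSq (U - Ubar) (Vbar - Vbar)) ≤ ε := by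
    rw [hns, Real.sqrt_mul (sq_nonneg t), Real.sqrt_sq ht0.le]
    calc t * Real.sqrt c ≤ (ε / Real.sqrt c) * Real.sqrt c := by
          exact mul_le_mul_of_nonneg_right (min_le_left _ _) hsc.le
      _ = ε := by field_simp
  have hprod : U * Vbarᵀ = Ubar * Vbarᵀ := by
    ext i k
    rw [Matrix.mul_apply, Matrix.mul_apply]
    refine Finset.sum_congr rfl fun l _ => ?_
    by_cases hl : l = j
    · subst hl
      have : Vbar k l = 0 := congrFun hV k
      simp [Matrix.transpose_apply, this]
    · simp [hUdef, Matrix.transpose_apply, hl]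
  have hfrob : frobInner U U = frobInner Ubar Ubar + (t^2 - 2*t) * c := by
    unfold frobInner
    rw [hc, Finset.mul_sum, ← Finset.sum_add_distrib]
    refine Finset.sum_congr rfl fun i _ => ?_
    have : ∀ k, U i k * U i k = Ubar i k * Ubar i k
        + (if k = j then (t^2 - 2*t) * (Ubar i j * Ubar i j) else 0) := by
      intro k
      simp only [hUdef, Matrix.of_apply]
      split
      · rename_i h; subst h; ring
      · ring
    rw [Finset.sum_congr rfl fun k _ => this k, Finset.sum_add_distrib,
      Finset.sum_ite_eq' Finset.univ j (fun _ => (t^2 - 2*t) * (Ubar i j * Ubar i j))]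
    simp
  have hl20 : l20 U = l20 Ubar := by
    unfold l20
    congr 1
    ext k
    simp only [Set.mem_setOf_eq]
    by_cases hk : k = j
    · subst hk
      have hcol : (fun i => U i k) = (1 - t) • (fun i => Ubar i k) := by
        funext i; simp [hUdef]
      rw [hcol]
      have h1t : (1:ℝ) - t ≠ 0 := by
        have : t < 1 := lt_of_le_of_lt ht1 (by norm_num)
        linarith
      rw [smul_ne_zero_iff]
      simp [h1t]
    · have hcol : (fun i => U i k) = (fun i => Ubar i k) := by
        funext i; simp [hUdef, hk]
      rw [hcol]
  have hfin := hmin U Vbar hsqrt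
  rw [hns] at hfin
  unfold Phi Fmu at hfin
  rw [hprod, hfrob, hl20] at hfin
  have hαt : 0 < α * (t^2 * c) := by positivity
  nlinarith [mul_pos hmu (mul_pos ht0 hc0),
    mul_nonneg (by linarith : (0:ℝ) ≤ 1/2 - t) (mul_pos hmu (mul_pos ht0 hc0)).le]

/-- if `(Ū,V̄)` is a strong local minimizer of `Φ_{λ,μ}`, then `J_Ū = J_V̄ =: J`
and the submatrix pair `(Ū_J, V̄_J)` of nonzero columns is a strong local minimizer of
`(A,B) ↦ f(ABᵀ) + (μ/2)(‖A‖_F² + ‖B‖_F²)` on `ℝ^{n×|J|} × ℝ^{m×|J|}`. -/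
theorem strong_local_min_Phi_imp_Fmu {n m r : ℕ}
    (f : Matrix (Fin n) (Fin m) ℝ → ℝ) (hf : ContDiff ℝ 1 f)
    (lam mu : ℝ) (hlam : 0 < lam) (hmu : 0 < mu)
    (Ubar : Matrix (Fin n) (Fin r) ℝ) (Vbar : Matrix (Fin m) (Fin r) ℝ)
    (hmin : ∃ α > (0:ℝ), ∃ ε > (0:ℝ), ∀ (U : Matrix (Fin n) (Fin r) ℝ)
        (V : Matrix (Fin m) (Fin r) ℝ),
        Real.sqrt (pairNormSq (U - Ubar) (V - Vbar)) ≤ ε →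
        Phi f lam mu U V ≥ Phi f lam mu Ubar Vbar + α * pairNormSq (U - Ubar) (V - Vbar)) :
    (∀ j : Fin r, (fun i => Ubar i j) ≠ 0 ↔ (fun i => Vbar i j) ≠ 0) ∧
      (∃ α' > (0:ℝ), ∃ δ > (0:ℝ),
        ∀ (A : Matrix (Fin n) {j : Fin r // (fun i => Ubar i j) ≠ 0} ℝ)
          (B : Matrix (Fin m) {j : Fin r // (fun i => Ubar i j) ≠ 0} ℝ),
          Real.sqrt (pairNormSq (A - Matrix.of fun i j => Ubar i j.1)
            (B - Matrix.of fun i j => Vbar i j.1)) ≤ δ →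
          Fmu f mu A B ≥
            Fmu f mu (Matrix.of fun i (j : {j : Fin r // (fun i => Ubar i j) ≠ 0}) => Ubar i j.1)
              (Matrix.of fun i j => Vbar i j.1) +
            α' * pairNormSq (A - Matrix.of fun i j => Ubar i j.1)
              (B - Matrix.of fun i j => Vbar i j.1)) := by
  obtain ⟨α, hα, ε, hε, hm⟩ := hmin
  -- swapped version of the minimality property
  have hswapPhi : ∀ (V : Matrix (Fin m) (Fin r) ℝ) (U : Matrix (Fin n) (Fin r) ℝ),
      Phi (fun X => f Xᵀ) lam mu V U = Phi f lam mu U V := by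
    intro V U
    unfold Phi Fmu
    simp only [Matrix.transpose_mul, Matrix.transpose_transpose]
    ring
  have hm' : ∀ (V : Matrix (Fin m) (Fin r) ℝ) (U : Matrix (Fin n) (Fin r) ℝ),
      Real.sqrt (pairNormSq (V - Vbar) (U - Ubar)) ≤ ε →
      Phi (fun X => f Xᵀ) lam mu V U ≥ Phi (fun X => f Xᵀ) lam mu Vbar Ubar
        + α * pairNormSq (V - Vbar) (U - Ubar) := by
    intro V U h
    rw [hswapPhi, hswapPhi, pairNormSq_comm]
    exact hm U V (by rwa [pairNormSq_comm])
  have hJ : ∀ j : Fin r, (fun i => Ubar i j) ≠ 0 ↔ (fun i => Vbar i j) ≠ 0 := by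
    intro j
    constructor
    · intro hU
      by_contra hVn
      exact hU (aux_col f lam mu α ε hmu hα hε Ubar Vbar hm j hVn)
    · intro hV
      by_contra hUn
      exact hV (aux_col (fun X => f Xᵀ) lam mu α ε hmu hα hε Vbar Ubar hm' j hUn)
  refine ⟨hJ, α, hα, ε, hε, fun A B hAB => ?_⟩
  let P : Fin r → Prop := fun j => (fun i => Ubar i j) ≠ 0
  have hUz : ∀ k, ¬ P k → ∀ i, Ubar i k = 0 := fun k hk i => congrFun (not_not.mp hk) i
  have hVz : ∀ k, ¬ P k → ∀ i, Vbar i k = 0 := fun k hk i =>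
    congrFun (not_not.mp (fun h => hk ((hJ k).mpr h))) i
  set U : Matrix (Fin n) (Fin r) ℝ :=
    Matrix.of fun i k => if hk : P k then A i ⟨k, hk⟩ else 0 with hUdef
  set V : Matrix (Fin m) (Fin r) ℝ :=
    Matrix.of fun i k => if hk : P k then B i ⟨k, hk⟩ else 0 with hVdef
  set A0 : Matrix (Fin n) (Subtype P) ℝ := Matrix.of fun i j => Ubar i j.1 with hA0
  set B0 : Matrix (Fin m) (Subtype P) ℝ := Matrix.of fun i j => Vbar i j.1 with hB0
  have hUe : ∀ i k, U i k = if hk : P k then A i ⟨k, hk⟩ else 0 := fun i k => rfl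
  have hVe : ∀ i k, V i k = if hk : P k then B i ⟨k, hk⟩ else 0 := fun i k => rfl
  have hUbe : ∀ i k, Ubar i k = if hk : P k then A0 i ⟨k, hk⟩ else 0 := by
    intro i k
    by_cases hk : P k
    · rw [dif_pos hk]; rfl
    · rw [dif_neg hk]; exact hUz k hk i
  have hVbe : ∀ i k, Vbar i k = if hk : P k then B0 i ⟨k, hk⟩ else 0 := by
    intro i k
    by_cases hk : P k
    · rw [dif_pos hk]; rfl
    · rw [dif_neg hk]; exact hVz k hk i
  have hUde : ∀ i k, (U - Ubar) i k = if hk : P k then (A - A0) i ⟨k, hk⟩ else 0 := by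
    intro i k
    rw [Matrix.sub_apply, hUe i k, hUbe i k]
    by_cases hk : P k
    · rw [dif_pos hk, dif_pos hk, dif_pos hk]; rfl
    · rw [dif_neg hk, dif_neg hk, dif_neg hk, sub_zero]
  have hVde : ∀ i k, (V - Vbar) i k = if hk : P k then (B - B0) i ⟨k, hk⟩ else 0 := by
    intro i k
    rw [Matrix.sub_apply, hVe i k, hVbe i k]
    by_cases hk : P k
    · rw [dif_pos hk, dif_pos hk, dif_pos hk]; rfl
    · rw [dif_neg hk, dif_neg hk, dif_neg hk, sub_zero]
  have h1 : U * Vᵀ = A * Bᵀ := mul_ext P U V A B hUe hVe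
  have h2 : Ubar * Vbarᵀ = A0 * B0ᵀ := mul_ext P Ubar Vbar A0 B0 hUbe hVbe
  have h3 : frobInner U U = frobInner A A := frob_ext P U A hUe
  have h4 : frobInner V V = frobInner B B := frob_ext P V B hVe
  have h5 : frobInner Ubar Ubar = frobInner A0 A0 := frob_ext P Ubar A0 hUbe
  have h6 : frobInner Vbar Vbar = frobInner B0 B0 := frob_ext P Vbar B0 hVbe
  have h7 : pairNormSq (U - Ubar) (V - Vbar) = pairNormSq (A - A0) (B - B0) := by
    unfold pairNormSq
    rw [frob_ext P (U - Ubar) (A - A0) hUde, frob_ext P (V - Vbar) (B - B0) hVde]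
  have hl20U : l20 U ≤ l20 Ubar := by
    apply Set.ncard_le_ncard _ (Set.toFinite _)
    intro k hk
    simp only [Set.mem_setOf_eq] at hk ⊢
    by_contra hPk
    exact hk (funext fun i => by rw [hUe i k, dif_neg (not_not.mpr hPk)]; rfl)
  have hl20V : l20 V ≤ l20 Vbar := by
    apply Set.ncard_le_ncard _ (Set.toFinite _)
    intro k hk
    simp only [Set.mem_setOf_eq] at hk ⊢
    apply (hJ k).mp
    by_contra hPk
    exact hk (funext fun i => by rw [hVe i k, dif_neg (not_not.mpr hPk)]; rfl)
  have hfin := hm U V (by rwa [h7])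
  rw [h7] at hfin
  unfold Phi Fmu at hfin
  unfold Fmu
  rw [h1, h2, h3, h4, h5, h6] at hfin
  have hcast : lam * ((l20 U : ℝ) + (l20 V : ℝ)) ≤ lam * ((l20 Ubar : ℝ) + (l20 Vbar : ℝ)) := by
    apply mul_le_mul_of_nonneg_left _ hlam.le
    have h8 := (Nat.cast_le (α := ℝ)).mpr hl20U
    have h9 := (Nat.cast_le (α := ℝ)).mpr hl20V
    push_cast at *
    linarith
  linarith
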